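/- arXiv:2601.04530 — 5 statements merged into one kernel-verified Lean document; each statement's English description precedes it below -/
import Mathlib

section
/- Let G be a finite simple graph of order n ≥ 2 in which every singleton {x} is an identity Seidel switch (i.e., x(G) ≅ G for every vertex x). Then every vertex of minimum degree δ(G) is adjacent to every vertex of maximum degree Δ(G), provided δ(G) < Δ(G) or the vertices are distinct. -/
/-- The Seidel switch of a graph `G` with respect to a set `S` of vertices:
a pair of distinct vertices is adjacent iff (it was adjacent in `G`) XOR
(exactly one of the two vertices lies in `S`). -/
def seidelSwitch {V : Type*} (G : SimpleGraph V) (S : Set V) : SimpleGraph V where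
  Adj a b := a ≠ b ∧ (G.Adj a b ↔ (a ∈ S ↔ b ∈ S))
  symm := by
    constructor
    intro a b h
    obtain ⟨h1, h2⟩ := h
    refine ⟨h1.symm, ?_⟩
    rw [SimpleGraph.adj_comm]
    tauto
  loopless := by constructor; intro a h; exact h.1 rfl

open scoped Classical in
/-- Graph isomorphisms preserve degrees. -/
lemma iso_degree_eq {V W : Type*} [Fintype V] [Fintype W]
    (G : SimpleGraph V) (H : SimpleGraph W) (e : G ≃g H) (v : V) :
    G.degree v = H.degree (e v) := by
  simp only [← SimpleGraph.card_neighborSet_eq_degree]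
  exact Fintype.card_congr (e.mapNeighborSet v)

open scoped Classical in
/-- If every singleton is an identity Seidel switch of `G` (of order at least 2),
then every vertex of minimum degree is adjacent to every vertex of maximum degree. -/
theorem minDegree_adj_maxDegree {V : Type*} [Fintype V] [Nonempty V]
    (G : SimpleGraph V) (hn : 2 ≤ Fintype.card V)
    (hIss : ∀ x : V, Nonempty (seidelSwitch G {x} ≃g G))
    (x y : V) (hxy : x ≠ y)
    (hx : G.degree x = G.minDegree) (hy : G.degree y = G.maxDegree) :
    G.Adj x y := by
  by_contra hadj
  set H := seidelSwitch G {x} with hH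
  obtain ⟨e⟩ := hIss x
  -- degree of y in H is degree of y in G plus 1
  have hns : H.neighborFinset y = insert x (G.neighborFinset y) := by
    ext v
    simp only [SimpleGraph.mem_neighborFinset, Finset.mem_insert]
    constructor
    · rintro ⟨hvy, hiff⟩
      by_cases hvx : v = x
      · exact Or.inl hvx
      · refine Or.inr ?_
        have : (y : V) ∈ ({x} : Set V) ↔ v ∈ ({x} : Set V) := by
          simp [hxy.symm, hvx]
        exact hiff.mpr this
    · rintro (hvx | hv)
      · subst hvx
        refine ⟨hxy.symm, ?_⟩
        constructor
        · intro h; exact absurd h.symm hadj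
        · intro h
          exfalso
          have : (y : V) ∈ ({v} : Set V) := h.mpr rfl
          exact hxy.symm this
      · refine ⟨G.ne_of_adj hv, ?_⟩
        constructor
        · intro _
          constructor
          · intro h; exact absurd h hxy.symm
          · intro h
            exact absurd (h ▸ hv : G.Adj y x) (fun hh => hadj hh.symm)
        · intro _; exact hv
  have hdeg : H.degree y = G.degree y + 1 := by
    rw [← SimpleGraph.card_neighborFinset_eq_degree, hns,
      Finset.card_insert_of_notMem, SimpleGraph.card_neighborFinset_eq_degree]
    intro h
    rw [SimpleGraph.mem_neighborFinset] at h
    exact hadj h.symm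
  have h1 : H.degree y = G.degree (e y) := iso_degree_eq _ _ e y
  have h2 : G.degree (e y) ≤ G.maxDegree := G.degree_le_maxDegree _
  omega
end

section
/- In the complete bipartite graph K_{n,n+1}, every vertex x in the part of size n+1 (i.e., every vertex of degree n) is a vertex identity Seidel switch: the graph obtained by switching at x is isomorphic to K_{n,n+1}. -/
private def swFun (n : ℕ) (b : Fin (n + 1)) :
    Fin n ⊕ Fin (n + 1) → Fin n ⊕ Fin (n + 1)
  | .inl a => .inr (b.succAbove a)
  | .inr c => (finSuccEquiv' b c).elim (.inr b) .inl

private lemma swFun_invol (n : ℕ) (b : Fin (n + 1)) (v : Fin n ⊕ Fin (n + 1)) :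
    swFun n b (swFun n b v) = v := by
  match v with
  | .inl a =>
    simp [swFun, finSuccEquiv'_succAbove]
  | .inr c =>
    rcases eq_or_ne c b with rfl | h
    · simp [swFun, finSuccEquiv'_at]
    · obtain ⟨a, rfl⟩ := Fin.exists_succAbove_eq h
      simp [swFun, finSuccEquiv'_succAbove]

private def swEquiv (n : ℕ) (b : Fin (n + 1)) :
    Fin n ⊕ Fin (n + 1) ≃ Fin n ⊕ Fin (n + 1) :=
  ⟨swFun n b, swFun n b, swFun_invol n b, swFun_invol n b⟩

/-- In `K_{n,n+1}`, every vertex of the part of size `n+1` is a vertex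
identity Seidel switch. -/
theorem completeBipartite_vertex_iss (n : ℕ) (b : Fin (n + 1)) :
    Nonempty (seidelSwitch (completeBipartiteGraph (Fin n) (Fin (n + 1))) {Sum.inr b}
      ≃g completeBipartiteGraph (Fin n) (Fin (n + 1))) := by
  refine ⟨⟨swEquiv n b, ?_⟩⟩
  rintro (x | c) (y | d)
  · simp [swEquiv, swFun, seidelSwitch, completeBipartiteGraph]
  · rcases eq_or_ne d b with rfl | h
    · simp [swEquiv, swFun, seidelSwitch, completeBipartiteGraph, finSuccEquiv'_at]
    · obtain ⟨a, rfl⟩ := Fin.exists_succAbove_eq h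
      simp [swEquiv, swFun, seidelSwitch, completeBipartiteGraph,
        finSuccEquiv'_succAbove, Fin.succAbove_ne]
  · rcases eq_or_ne c b with rfl | h
    · simp [swEquiv, swFun, seidelSwitch, completeBipartiteGraph, finSuccEquiv'_at]
    · obtain ⟨a, rfl⟩ := Fin.exists_succAbove_eq h
      simp [swEquiv, swFun, seidelSwitch, completeBipartiteGraph,
        finSuccEquiv'_succAbove, Fin.succAbove_ne]
  · rcases eq_or_ne c b with h | hc <;> [subst c; skip] <;> rcases eq_or_ne d b with h | hd <;>
      first | subst d | skip
    · simp [swEquiv, swFun, seidelSwitch, completeBipartiteGraph, finSuccEquiv'_at]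
    · obtain ⟨a, rfl⟩ := Fin.exists_succAbove_eq hd
      simp [swEquiv, swFun, seidelSwitch, completeBipartiteGraph, finSuccEquiv'_at,
        finSuccEquiv'_succAbove, Fin.succAbove_ne, (Fin.succAbove_ne b a).symm]
    · obtain ⟨a, rfl⟩ := Fin.exists_succAbove_eq hc
      simp [swEquiv, swFun, seidelSwitch, completeBipartiteGraph, finSuccEquiv'_at,
        finSuccEquiv'_succAbove, Fin.succAbove_ne, (Fin.succAbove_ne b a).symm]
    · obtain ⟨a, rfl⟩ := Fin.exists_succAbove_eq hc
      obtain ⟨a', rfl⟩ := Fin.exists_succAbove_eq hd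
      simp [swEquiv, swFun, seidelSwitch, completeBipartiteGraph,
        finSuccEquiv'_succAbove, Fin.succAbove_ne, (Fin.succAbove_ne b a).symm]
end

section
/- Every edge of the complete bipartite graph K_{m,n} is an edge identity Seidel switch: for any edge e = xy of K_{m,n}, switching with respect to {x,y} yields a graph isomorphic to K_{m,n}. -/
/-- Every edge of `K_{m,n}` is an edge identity Seidel switch. -/
theorem completeBipartite_edge_iss (m n : ℕ) (a : Fin m) (b : Fin n) :
    Nonempty (seidelSwitch (completeBipartiteGraph (Fin m) (Fin n))
        {Sum.inl a, Sum.inr b}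
      ≃g completeBipartiteGraph (Fin m) (Fin n)) := by
  refine ⟨⟨Equiv.swap (Sum.inl a) (Sum.inr b), ?_⟩⟩
  intro x y
  rcases x with x | x <;> rcases y with y | y <;>
    simp [seidelSwitch, Equiv.swap_apply_def] <;> aesop
end

section
/- Let G be a finite simple graph of order n and e = xy an edge such that {x,y}(G) ≅ G (an edge-ISS). Then deg_G(x) + deg_G(y) = n. -/
open Finset in
open scoped Classical in
/-- If `e = xy` is an edge identity Seidel switch of a graph of order `n`,
then `deg(x) + deg(y) = n`. -/
theorem edge_iss_degree_sum {V : Type*} [Fintype V] (G : SimpleGraph V) (x y : V)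
    (hxy : G.Adj x y) (h : Nonempty (seidelSwitch G {x, y} ≃g G)) :
    G.degree x + G.degree y = Fintype.card V := by
  classical
  obtain ⟨f⟩ := h
  have hne : x ≠ y := hxy.ne
  set G' := seidelSwitch G {x, y} with hG'
  set n := Fintype.card V with hn
  -- the "cross" predicate: exactly one endpoint in {x, y}
  set cross : V → V → Prop := fun a b => ¬((a = x ∨ a = y) ↔ (b = x ∨ b = y)) with hcross
  -- total degree sums agree since the graphs are isomorphic
  have hsum : ∑ v, G'.degree v = ∑ v, G.degree v := by
    rw [SimpleGraph.sum_degrees_eq_twice_card_edges, SimpleGraph.sum_degrees_eq_twice_card_edges,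
      f.card_edgeFinset_eq]
  -- the per-vertex key identity
  have key : ∀ v, G'.degree v + 2 * (univ.filter fun b => G.Adj v b ∧ cross v b).card
      = G.degree v + (univ.filter fun b => v ≠ b ∧ cross v b).card := by
    intro v
    rw [SimpleGraph.degree, SimpleGraph.degree, SimpleGraph.neighborFinset_eq_filter,
      SimpleGraph.neighborFinset_eq_filter]
    simp only [Finset.card_filter]
    rw [Finset.mul_sum, ← Finset.sum_add_distrib, ← Finset.sum_add_distrib]
    refine Finset.sum_congr rfl fun b _ => ?_
    have hadj' : G'.Adj v b ↔ (v ≠ b ∧ (G.Adj v b ↔ ((v = x ∨ v = y) ↔ (b = x ∨ b = y)))) := by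
      simp [hG', seidelSwitch, Set.mem_insert_iff]
    by_cases hvb : v = b
    · subst hvb
      simp [hadj', hcross, G.irrefl]
    · by_cases hc : (v = x ∨ v = y) ↔ (b = x ∨ b = y)
      · by_cases ha : G.Adj v b <;> simp [hadj', hcross, hvb, hc, ha]
      · by_cases ha : G.Adj v b <;> simp [hadj', hcross, hvb, hc, ha]
  -- sum the key identity over all vertices
  set A : ℕ := ∑ v, (univ.filter fun b => G.Adj v b ∧ cross v b).card with hA
  set B : ℕ := ∑ v, (univ.filter fun b => v ≠ b ∧ cross v b).card with hB
  have keysum : (∑ v, G'.degree v) + 2 * A = (∑ v, G.degree v) + B := by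
    rw [hA, hB, Finset.mul_sum, ← Finset.sum_add_distrib, ← Finset.sum_add_distrib]
    exact Finset.sum_congr rfl fun v _ => key v
  -- auxiliary sets
  have hpair_sub : ({x, y} : Finset V) ⊆ univ := Finset.subset_univ _
  have hcardpair : ({x, y} : Finset V).card = 2 := Finset.card_pair hne
  have hcardR : (univ \ ({x, y} : Finset V)).card + 2 = n := by
    rw [Finset.card_sdiff_of_subset hpair_sub, hcardpair, Finset.card_univ]
    have : 2 ≤ n := by
      rw [← hcardpair, hn, ← Finset.card_univ]
      exact Finset.card_le_card hpair_sub
    omega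
  -- evaluate A
  have hax : (univ.filter fun b => G.Adj x b ∧ cross x b).card + 1 = G.degree x := by
    have hfe : (univ.filter fun b => G.Adj x b ∧ cross x b) = (G.neighborFinset x).erase y := by
      ext b
      simp only [Finset.mem_filter, Finset.mem_univ, true_and, Finset.mem_erase,
        SimpleGraph.mem_neighborFinset, hcross]
      have h1 : G.Adj x b → ¬(b = x) := fun ha h => G.ne_of_adj ha h.symm
      tauto
    rw [hfe, Finset.card_erase_of_mem (by simpa using hxy)]
    have hd : G.degree x = (G.neighborFinset x).card := rfl
    have hpos : 0 < (G.neighborFinset x).card := Finset.card_pos.mpr ⟨y, by simpa using hxy⟩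
    omega
  have hay : (univ.filter fun b => G.Adj y b ∧ cross y b).card + 1 = G.degree y := by
    have hfe : (univ.filter fun b => G.Adj y b ∧ cross y b) = (G.neighborFinset y).erase x := by
      ext b
      simp only [Finset.mem_filter, Finset.mem_univ, true_and, Finset.mem_erase,
        SimpleGraph.mem_neighborFinset, hcross]
      have h1 : G.Adj y b → ¬(b = y) := fun ha h => G.ne_of_adj ha h.symm
      tauto
    rw [hfe, Finset.card_erase_of_mem (by simpa using hxy.symm)]
    have hd : G.degree y = (G.neighborFinset y).card := rfl
    have hpos : 0 < (G.neighborFinset y).card := Finset.card_pos.mpr ⟨x, by simpa using hxy.symm⟩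
    omega
  -- inner counts for vertices outside {x, y}
  have haR : ∀ v ∈ univ \ ({x, y} : Finset V),
      (univ.filter fun b => G.Adj v b ∧ cross v b).card
        = (if G.Adj v x then 1 else 0) + (if G.Adj v y then 1 else 0) := by
    intro v hv
    simp only [Finset.mem_sdiff, Finset.mem_insert, Finset.mem_singleton] at hv
    have hvx : v ≠ x := fun h => hv.2 (Or.inl h)
    have hvy : v ≠ y := fun h => hv.2 (Or.inr h)
    have hfe : (univ.filter fun b => G.Adj v b ∧ cross v b)
        = ({x, y} : Finset V).filter (fun b => G.Adj v b) := by
      ext b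
      simp only [Finset.mem_filter, Finset.mem_univ, true_and, Finset.mem_insert,
        Finset.mem_singleton, hcross]
      tauto
    rw [hfe, Finset.card_filter, Finset.sum_pair hne]
  have hbR : ∀ v ∈ univ \ ({x, y} : Finset V),
      (univ.filter fun b => v ≠ b ∧ cross v b).card = 2 := by
    intro v hv
    simp only [Finset.mem_sdiff, Finset.mem_insert, Finset.mem_singleton] at hv
    have hvx : v ≠ x := fun h => hv.2 (Or.inl h)
    have hvy : v ≠ y := fun h => hv.2 (Or.inr h)
    have hfe : (univ.filter fun b => v ≠ b ∧ cross v b) = ({x, y} : Finset V) := by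
      ext b
      simp only [Finset.mem_filter, Finset.mem_univ, true_and, Finset.mem_insert,
        Finset.mem_singleton, hcross]
      have h1 : b = x → ¬(v = b) := fun h => h ▸ hvx
      have h2 : b = y → ¬(v = b) := fun h => h ▸ hvy
      tauto
    rw [hfe, hcardpair]
  have hbx : (univ.filter fun b => x ≠ b ∧ cross x b).card + 2 = n := by
    have hfe : (univ.filter fun b => x ≠ b ∧ cross x b) = univ \ ({x, y} : Finset V) := by
      ext b
      simp only [Finset.mem_filter, Finset.mem_univ, true_and, Finset.mem_sdiff,
        Finset.mem_insert, Finset.mem_singleton, hcross]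
      have h2 : b = x ↔ x = b := eq_comm
      tauto
    rw [hfe]; exact hcardR
  have hby' : (univ.filter fun b => y ≠ b ∧ cross y b).card + 2 = n := by
    have hfe : (univ.filter fun b => y ≠ b ∧ cross y b) = univ \ ({x, y} : Finset V) := by
      ext b
      simp only [Finset.mem_filter, Finset.mem_univ, true_and, Finset.mem_sdiff,
        Finset.mem_insert, Finset.mem_singleton, hcross]
      have h2 : b = y ↔ y = b := eq_comm
      tauto
    rw [hfe]; exact hcardR
  -- column sums over the rest
  have hcolx : (∑ v ∈ univ \ ({x, y} : Finset V), if G.Adj v x then 1 else 0) + 1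
      = G.degree x := by
    have htot : (∑ v ∈ univ \ ({x, y} : Finset V), if G.Adj v x then 1 else 0)
        + (∑ v ∈ ({x, y} : Finset V), if G.Adj v x then 1 else 0)
        = ∑ v, if G.Adj v x then 1 else 0 := Finset.sum_sdiff hpair_sub
    have hdeg : (∑ v, if G.Adj v x then 1 else 0) = G.degree x := by
      rw [SimpleGraph.degree, SimpleGraph.neighborFinset_eq_filter, Finset.card_filter]
      exact Finset.sum_congr rfl fun v _ => by rw [G.adj_comm]
    rw [Finset.sum_pair hne] at htot
    simp only [G.irrefl, if_false, if_pos hxy.symm] at htot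
    omega
  have hcoly : (∑ v ∈ univ \ ({x, y} : Finset V), if G.Adj v y then 1 else 0) + 1
      = G.degree y := by
    have htot : (∑ v ∈ univ \ ({x, y} : Finset V), if G.Adj v y then 1 else 0)
        + (∑ v ∈ ({x, y} : Finset V), if G.Adj v y then 1 else 0)
        = ∑ v, if G.Adj v y then 1 else 0 := Finset.sum_sdiff hpair_sub
    have hdeg : (∑ v, if G.Adj v y then 1 else 0) = G.degree y := by
      rw [SimpleGraph.degree, SimpleGraph.neighborFinset_eq_filter, Finset.card_filter]
      exact Finset.sum_congr rfl fun v _ => by rw [G.adj_comm]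
    rw [Finset.sum_pair hne] at htot
    simp only [G.irrefl, if_false, if_pos hxy] at htot
    omega
  -- assemble A
  have hAsplit : (∑ v ∈ univ \ ({x, y} : Finset V),
        (univ.filter fun b => G.Adj v b ∧ cross v b).card)
      + (∑ v ∈ ({x, y} : Finset V), (univ.filter fun b => G.Adj v b ∧ cross v b).card)
      = A := Finset.sum_sdiff hpair_sub
  have hArest : (∑ v ∈ univ \ ({x, y} : Finset V),
        (univ.filter fun b => G.Adj v b ∧ cross v b).card)
      = (∑ v ∈ univ \ ({x, y} : Finset V), if G.Adj v x then 1 else 0)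
        + (∑ v ∈ univ \ ({x, y} : Finset V), if G.Adj v y then 1 else 0) := by
    rw [← Finset.sum_add_distrib]
    exact Finset.sum_congr rfl haR
  have hApair : (∑ v ∈ ({x, y} : Finset V), (univ.filter fun b => G.Adj v b ∧ cross v b).card)
      = (univ.filter fun b => G.Adj x b ∧ cross x b).card
        + (univ.filter fun b => G.Adj y b ∧ cross y b).card := Finset.sum_pair hne
  -- assemble B
  have hBsplit : (∑ v ∈ univ \ ({x, y} : Finset V),
        (univ.filter fun b => v ≠ b ∧ cross v b).card)
      + (∑ v ∈ ({x, y} : Finset V), (univ.filter fun b => v ≠ b ∧ cross v b).card)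
      = B := Finset.sum_sdiff hpair_sub
  have hBrest : (∑ v ∈ univ \ ({x, y} : Finset V),
        (univ.filter fun b => v ≠ b ∧ cross v b).card)
      = 2 * (univ \ ({x, y} : Finset V)).card := by
    rw [Finset.sum_congr rfl hbR, Finset.sum_const, smul_eq_mul, mul_comm]
  have hBpair : (∑ v ∈ ({x, y} : Finset V), (univ.filter fun b => v ≠ b ∧ cross v b).card)
      = (univ.filter fun b => x ≠ b ∧ cross x b).card
        + (univ.filter fun b => y ≠ b ∧ cross y b).card := Finset.sum_pair hne
  omega
end

section
/- Let G be a finite simple graph of order n and e = xy an edge of G with H the induced subgraph on V(G)\{x,y}. Suppose there exists an isomorphism ψ from G to {x,y}(G) with ψ(x) = y, ψ(y) = x, and ψ(V(H)) = V(H). Then the restriction φ = ψ|_{V(H)} is an automorphism of H satisfying φ(N_G(x)\{y}) = V(H)\N_G(y). (Necessity direction of the edge-ISS characterization under the assumption that the isomorphism swaps x and y and preserves V(H).) -/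
lemma seidelSwitch_adj_out {V : Type*} (G : SimpleGraph V) (S : Set V)
    {a b : V} (ha : a ∉ S) (hb : b ∉ S) :
    (seidelSwitch G S).Adj a b ↔ G.Adj a b := by
  constructor
  · intro h
    exact h.2.mpr (iff_of_false ha hb)
  · intro h
    exact ⟨h.ne, iff_of_true h (iff_of_false ha hb)⟩

lemma seidelSwitch_adj_cross {V : Type*} (G : SimpleGraph V) (S : Set V)
    {a b : V} (ha : a ∈ S) (hb : b ∉ S) :
    (seidelSwitch G S).Adj a b ↔ ¬ G.Adj a b := by
  have hne : a ≠ b := fun h => hb (h ▸ ha)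
  constructor
  · intro h hadj
    exact hb ((h.2.mp hadj).mp ha)
  · intro h
    refine ⟨hne, ?_⟩
    constructor
    · intro hadj; exact absurd hadj h
    · intro hiff; exact absurd (hiff.mp ha) hb

/-- Necessity direction of the edge-ISS characterization: if an isomorphism
`ψ : G ≃ {x,y}(G)` swaps `x` and `y` and preserves `V(H) = V \ {x,y}`, then its
restriction to `V(H)` is an automorphism `φ` of the induced subgraph `H`
mapping `N(x) \ {y}` onto `V(H) \ N(y)`. -/
theorem edge_iss_aut_of_iso {V : Type*} [Fintype V] [DecidableEq V]
    (G : SimpleGraph V) (x y : V) (hxy : G.Adj x y)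
    (ψ : G ≃g seidelSwitch G {x, y})
    (hx : ψ x = y) (hy : ψ y = x)
    (hH : ∀ v : V, v ∉ ({x, y} : Set V) → ψ v ∉ ({x, y} : Set V)) :
    ∃ φ : G.induce ({x, y}ᶜ : Set V) ≃g G.induce ({x, y}ᶜ : Set V),
      (∀ v : ({x, y}ᶜ : Set V), (φ v : V) = ψ ↑v) ∧
      φ '' {v : ({x, y}ᶜ : Set V) | G.Adj x ↑v}
        = {v : ({x, y}ᶜ : Set V) | ¬ G.Adj y ↑v} := by
  have hmem : ∀ v : ({x, y}ᶜ : Set V), (ψ v : V) ∈ ({x, y}ᶜ : Set V) :=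
    fun v => hH v v.2
  have hmem' : ∀ v : ({x, y}ᶜ : Set V), (ψ.symm v : V) ∈ ({x, y}ᶜ : Set V) := by
    rintro ⟨v, hv⟩ h
    rcases h with h | h
    · apply hv
      have h2 := congrArg ψ h
      simp only [RelIso.apply_symm_apply, hx] at h2
      rw [h2]; right; rfl
    · apply hv
      rw [Set.mem_singleton_iff] at h
      have h2 := congrArg ψ h
      simp only [RelIso.apply_symm_apply, hy] at h2
      rw [h2]; left; rfl
  have key : ∀ u v : ({x, y}ᶜ : Set V), G.Adj (ψ u) (ψ v) ↔ G.Adj u v := by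
    intro u v
    rw [← seidelSwitch_adj_out G {x, y} (hmem u) (hmem v)]
    exact ψ.map_rel_iff
  refine ⟨⟨⟨fun v => ⟨ψ v, hmem v⟩, fun v => ⟨ψ.symm v, hmem' v⟩,
      fun v => by simp, fun v => by simp⟩, ?_⟩, fun v => rfl, ?_⟩
  · intro u v
    exact key u v
  · ext ⟨w, hw⟩
    simp only [Set.mem_image, Set.mem_setOf_eq]
    have hcross : ∀ v : ({x, y}ᶜ : Set V), G.Adj x ↑v ↔ ¬ G.Adj y (ψ v) := by
      intro v
      have := ψ.map_rel_iff (a := x) (b := (v : V))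
      rw [hx] at this
      rw [← this, seidelSwitch_adj_cross G {x, y} (by right; rfl) (hmem v)]
    constructor
    · rintro ⟨v, hv, hvw⟩
      have hvw' : (ψ v : V) = w := congrArg Subtype.val hvw
      rw [← hvw']
      exact (hcross v).mp hv
    · intro h
      refine ⟨⟨ψ.symm w, hmem' ⟨w, hw⟩⟩, ?_, ?_⟩
      · rw [hcross]
        simpa using h
      · exact Subtype.ext (ψ.apply_symm_apply w)
end
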